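/- Let v : (Fin n → ℝ≥0) → ℝ be a nonnegative, weakly increasing SOS valuation. For 0 ≤ a ≤ n-1, ∑_{A ⊆ [n]\{i}, |A| = a} v(s_A, 0_B, s_i) ≥ (a · C(n-1, a) / (n-1)) · v(s), where B = ([n]\{i})\A. -/

import Mathlib

set_option maxHeartbeats 1000000

def SOS {n : ℕ} (v : (Fin n → NNReal) → ℝ) : Prop :=
  ∀ (i : Fin n) (s s' : Fin n → NNReal) (t : NNReal), s ≤ s' → s' i = s i → s i ≤ t →
    v (Function.update s' i t) - v s' ≤ v (Function.update s i t) - v s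

def zeroOutside {n : ℕ} (s : Fin n → NNReal) (i : Fin n) (A : Finset (Fin n)) :
    Fin n → NNReal :=
  fun j => if j = i ∨ j ∈ A then s j else 0

namespace Stmt7Aux

lemma zo_mono {n : ℕ} (s : Fin n → NNReal) (i : Fin n) {A B : Finset (Fin n)} (h : A ⊆ B) :
    zeroOutside s i A ≤ zeroOutside s i B := by
  intro j
  unfold zeroOutside
  by_cases hj : j = i ∨ j ∈ A
  · rw [if_pos hj, if_pos (hj.imp id (@h j))]
  · rw [if_neg hj]; exact zero_le

lemma zo_notmem {n : ℕ} (s : Fin n → NNReal) (i : Fin n) {A : Finset (Fin n)} {k : Fin n}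
    (hk : k ∉ A) (hki : k ≠ i) : zeroOutside s i A k = 0 := by
  unfold zeroOutside
  rw [if_neg]
  push_neg
  exact ⟨hki, hk⟩

lemma zo_update {n : ℕ} (s : Fin n → NNReal) (i : Fin n) (A : Finset (Fin n)) (k : Fin n) :
    Function.update (zeroOutside s i A) k (s k) = zeroOutside s i (insert k A) := by
  funext j
  rcases eq_or_ne j k with rfl | hj
  · simp [zeroOutside]
  · rw [Function.update_of_ne hj]
    simp [zeroOutside, Finset.mem_insert, hj]

lemma telescope {n : ℕ} (v : (Fin n → NNReal) → ℝ) (hnonneg : ∀ s, 0 ≤ v s)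
    (hsos : SOS v) (s : Fin n → NNReal) (i : Fin n) (A : Finset (Fin n)) (hiA : i ∉ A) :
    ∑ k ∈ A, (v (zeroOutside s i A) - v (zeroOutside s i (A.erase k)))
      ≤ v (zeroOutside s i A) := by
  induction A using Finset.induction_on with
  | empty => simpa using hnonneg _
  | @insert j A hj ih =>
    have hij : i ≠ j := fun h => hiA (by simp [h])
    have hiA' : i ∉ A := fun h => hiA (Finset.mem_insert_of_mem h)
    rw [Finset.sum_insert hj, Finset.erase_insert hj]
    have hstep : ∀ k ∈ A,
        v (zeroOutside s i (insert j A)) - v (zeroOutside s i ((insert j A).erase k))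
          ≤ v (zeroOutside s i A) - v (zeroOutside s i (A.erase k)) := by
      intro k hkA
      have hkj : k ≠ j := fun h => hj (h ▸ hkA)
      have hki : k ≠ i := fun h => hiA' (h ▸ hkA)
      have hE : (insert j A).erase k = insert j (A.erase k) :=
        Finset.erase_insert_of_ne hkj.symm
      have h1 : Function.update (zeroOutside s i (A.erase k)) k (s k)
          = zeroOutside s i A := by
        rw [zo_update, Finset.insert_erase hkA]
      have h2 : Function.update (zeroOutside s i (insert j (A.erase k))) k (s k)
          = zeroOutside s i (insert j A) := by
        rw [zo_update, Finset.insert_comm, Finset.insert_erase hkA]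
      have hle : zeroOutside s i (A.erase k) ≤ zeroOutside s i (insert j (A.erase k)) :=
        zo_mono s i (Finset.subset_insert _ _)
      have hagree : zeroOutside s i (insert j (A.erase k)) k = zeroOutside s i (A.erase k) k := by
        rw [zo_notmem s i (by simp [hkj]) hki, zo_notmem s i (Finset.notMem_erase _ _) hki]
      have hkt : zeroOutside s i (A.erase k) k ≤ s k := by
        rw [zo_notmem s i (Finset.notMem_erase _ _) hki]; exact zero_le
      have := hsos k (zeroOutside s i (A.erase k)) (zeroOutside s i (insert j (A.erase k)))
        (s k) hle hagree hkt
      rw [h1, h2] at this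
      rw [hE]
      linarith
    have hsum := Finset.sum_le_sum hstep
    have := ih hiA'
    linarith


lemma double_count {n : ℕ} (f : Finset (Fin n) → ℝ) (E : Finset (Fin n)) (a : ℕ) :
    ∑ A' ∈ E.powersetCard (a+1), ∑ k ∈ A', f (A'.erase k)
      = ∑ A ∈ E.powersetCard a, ((E.card - a : ℕ) : ℝ) * f A := by
  have hR : ∀ A ∈ E.powersetCard a, ((E.card - a : ℕ) : ℝ) * f A = ∑ _k ∈ E \ A, f A := by
    intro A hA
    obtain ⟨hAE, hAc⟩ := Finset.mem_powersetCard.mp hA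
    rw [Finset.sum_const, Finset.card_sdiff_of_subset hAE, hAc, nsmul_eq_mul]
  rw [Finset.sum_congr rfl hR, Finset.sum_sigma', Finset.sum_sigma']
  refine Finset.sum_nbij' (i := fun p => ⟨p.1.erase p.2, p.2⟩)
    (j := fun p => ⟨insert p.2 p.1, p.2⟩) ?_ ?_ ?_ ?_ ?_
  · rintro ⟨A', k⟩ hp
    rw [Finset.mem_sigma] at hp ⊢
    obtain ⟨hA', hk⟩ := hp
    obtain ⟨hAE, hAc⟩ := Finset.mem_powersetCard.mp hA'
    refine ⟨Finset.mem_powersetCard.mpr ⟨(Finset.erase_subset _ _).trans hAE, ?_⟩, ?_⟩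
    · rw [Finset.card_erase_of_mem hk, hAc]; rfl
    · exact Finset.mem_sdiff.mpr ⟨hAE hk, Finset.notMem_erase _ _⟩
  · rintro ⟨A, k⟩ hp
    rw [Finset.mem_sigma] at hp ⊢
    obtain ⟨hA, hk⟩ := hp
    obtain ⟨hAE, hAc⟩ := Finset.mem_powersetCard.mp hA
    obtain ⟨hkE, hkA⟩ := Finset.mem_sdiff.mp hk
    refine ⟨Finset.mem_powersetCard.mpr ⟨Finset.insert_subset hkE hAE, ?_⟩,
      Finset.mem_insert_self _ _⟩
    rw [Finset.card_insert_of_notMem hkA, hAc]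
  · rintro ⟨A', k⟩ hp
    rw [Finset.mem_sigma] at hp
    simp [Finset.insert_erase hp.2]
  · rintro ⟨A, k⟩ hp
    rw [Finset.mem_sigma] at hp
    simp [Finset.erase_insert (Finset.mem_sdiff.mp hp.2).2]
  · rintro ⟨A', k⟩ _
    rfl

end Stmt7Aux

theorem stmt_7 {n : ℕ} (v : (Fin n → NNReal) → ℝ)
    (hnonneg : ∀ s, 0 ≤ v s) (hmono : Monotone v) (hsos : SOS v)
    (s : Fin n → NNReal) (i : Fin n) (a : ℕ) (ha : a ≤ n - 1) :
    ∑ A ∈ (Finset.univ.erase i).powersetCard a, v (zeroOutside s i A) ≥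
      (a : ℝ) * (Nat.choose (n - 1) a : ℝ) / ((n : ℝ) - 1) * v s := by
  classical
  set E := (Finset.univ.erase i : Finset (Fin n)) with hE
  have hiE : i ∉ E := Finset.notMem_erase _ _
  have hEcard : E.card = n - 1 := by
    rw [hE, Finset.card_erase_of_mem (Finset.mem_univ i), Finset.card_univ, Fintype.card_fin]
  have key : ∀ b a', a' + b = n - 1 →
      ((n - 1 : ℕ) : ℝ) * ∑ A ∈ E.powersetCard a', v (zeroOutside s i A)
        ≥ (a' : ℝ) * (Nat.choose (n - 1) a' : ℝ) * v s := by
    intro b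
    induction b with
    | zero =>
      intro a' ha'
      have haa : a' = n - 1 := by omega
      subst haa
      rw [← hEcard, Finset.powersetCard_self, Finset.sum_singleton, Nat.choose_self]
      have hzo : zeroOutside s i E = s := by
        funext j
        by_cases hj : j = i
        · simp [zeroOutside, hj]
        · simp [zeroOutside, hE, Finset.mem_erase, hj]
      rw [hzo]
      simp
    | succ b ih =>
      intro a' ha'
      have ihs := ih (a' + 1) (by omega)
      have halt : a' < n - 1 := by omega
      have per : ∀ A' ∈ E.powersetCard (a' + 1),
          (a' : ℝ) * v (zeroOutside s i A') ≤ ∑ k ∈ A', v (zeroOutside s i (A'.erase k)) := by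
        intro A' hA'
        obtain ⟨hsub, hcard⟩ := Finset.mem_powersetCard.mp hA'
        have htel := Stmt7Aux.telescope v hnonneg hsos s i A' (fun h => hiE (hsub h))
        rw [Finset.sum_sub_distrib, Finset.sum_const, hcard, nsmul_eq_mul] at htel
        push_cast at htel
        linarith
      have h1 : (a' : ℝ) * ∑ A' ∈ E.powersetCard (a' + 1), v (zeroOutside s i A')
          ≤ ((n - 1 - a' : ℕ) : ℝ) * ∑ A ∈ E.powersetCard a', v (zeroOutside s i A) := by
        rw [Finset.mul_sum, Finset.mul_sum]
        calc ∑ A' ∈ E.powersetCard (a' + 1), (a' : ℝ) * v (zeroOutside s i A')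
            ≤ ∑ A' ∈ E.powersetCard (a' + 1), ∑ k ∈ A', v (zeroOutside s i (A'.erase k)) :=
              Finset.sum_le_sum per
          _ = ∑ A ∈ E.powersetCard a', ((E.card - a' : ℕ) : ℝ) * v (zeroOutside s i A) :=
              Stmt7Aux.double_count (fun A => v (zeroOutside s i A)) E a'
          _ = ∑ A ∈ E.powersetCard a', ((n - 1 - a' : ℕ) : ℝ) * v (zeroOutside s i A) := by
              rw [hEcard]
      set S0 := ∑ A ∈ E.powersetCard a', v (zeroOutside s i A) with hS0
      set S1 := ∑ A ∈ E.powersetCard (a' + 1), v (zeroOutside s i A) with hS1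
      have hc : (0 : ℝ) < ((n - 1 - a' : ℕ) : ℝ) := by
        have : 0 < n - 1 - a' := by omega
        exact_mod_cast this
      have hid : ((a' : ℝ) + 1) * (Nat.choose (n - 1) (a' + 1) : ℝ)
          = (Nat.choose (n - 1) a' : ℝ) * ((n - 1 - a' : ℕ) : ℝ) := by
        have h2 : (Nat.choose (n - 1) (a' + 1)) * (a' + 1)
            = (Nat.choose (n - 1) a') * (n - 1 - a') := Nat.choose_succ_right_eq (n - 1) a'
        have h2c : ((Nat.choose (n - 1) (a' + 1) * (a' + 1) : ℕ) : ℝ)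
            = ((Nat.choose (n - 1) a' : ℕ) : ℝ) * ((n - 1 - a' : ℕ) : ℝ) := by
          rw [h2]; push_cast; ring
        push_cast at h2c
        linarith
      have hm0 : (0 : ℝ) ≤ ((n - 1 : ℕ) : ℝ) := Nat.cast_nonneg _
      have ha0 : (0 : ℝ) ≤ (a' : ℝ) := Nat.cast_nonneg _
      have t1 := mul_le_mul_of_nonneg_left h1 hm0
      have ihs' : ((a' : ℝ) + 1) * (Nat.choose (n - 1) (a' + 1) : ℝ) * v s
          ≤ ((n - 1 : ℕ) : ℝ) * S1 := by
        have := ihs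
        push_cast at this ⊢
        linarith
      have t2 := mul_le_mul_of_nonneg_left ihs' ha0
      have hid2 : (a' : ℝ) * v s * (((a' : ℝ) + 1) * (Nat.choose (n - 1) (a' + 1) : ℝ))
          = (a' : ℝ) * v s * ((Nat.choose (n - 1) a' : ℝ) * ((n - 1 - a' : ℕ) : ℝ)) := by
        rw [hid]
      rw [ge_iff_le, ← mul_le_mul_iff_right₀ hc]
      linarith [t1, t2, hid2]
  -- conclude
  rcases Nat.eq_zero_or_pos a with rfl | hapos
  · have : (0 : ℝ) ≤ ∑ A ∈ E.powersetCard 0, v (zeroOutside s i A) :=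
      Finset.sum_nonneg fun _ _ => hnonneg _
    simpa using this
  · have hn2 : 2 ≤ n := by omega
    have hkey := key (n - 1 - a) a (by omega)
    have hcast : ((n - 1 : ℕ) : ℝ) = (n : ℝ) - 1 := by
      have : 1 ≤ n := by omega
      push_cast [Nat.cast_sub this]
      ring
    rw [hcast] at hkey
    have hm : (0 : ℝ) < (n : ℝ) - 1 := by
      have : (2 : ℝ) ≤ (n : ℝ) := by exact_mod_cast hn2
      linarith
    rw [ge_iff_le, div_mul_eq_mul_div, div_le_iff₀ hm]
    linarith
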